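/- Let T be a Silver tree, n ∈ ℕ, and let F be the set of all nodes of T of length n. Suppose t₀ ∈ F and S is a Silver tree with S ⊆ T_{t₀}. Then the union ⋃_{t ∈ F} (t ⊕ S) is a Silver tree contained in T, and its body equals ⋃_{t ∈ F} {t ⊕ x : x ∈ [S]}. -/

import Mathlib

/-- `T` is a tree of finite binary sequences: closed under initial segments. -/
def IsTree (T : Set (List Bool)) : Prop :=
  ∀ t ∈ T, ∀ k : ℕ, t.take k ∈ T

/-- `t` is a splitting node of `T`: it lies in `T` and both its one-bit extensions do. -/
def SplitNode (T : Set (List Bool)) (t : List Bool) : Prop :=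
  t ∈ T ∧ t ++ [false] ∈ T ∧ t ++ [true] ∈ T

/-- `T` is a perfect tree: a nonempty tree in which every node extends to a splitting node. -/
def IsPerfect (T : Set (List Bool)) : Prop :=
  IsTree T ∧ T.Nonempty ∧ ∀ t ∈ T, ∃ s, t <+: s ∧ SplitNode T s

/-- `T` is a Silver (uniform perfect) tree: perfect, and nodes of equal length
have the same one-bit extensions in `T`. -/
def IsSilver (T : Set (List Bool)) : Prop :=
  IsPerfect T ∧ ∀ s ∈ T, ∀ t ∈ T, s.length = t.length →
    ∀ i : Bool, (s ++ [i] ∈ T ↔ t ++ [i] ∈ T)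

/-- The body `[T]` of a tree: all infinite branches whose finite initial
segments all lie in `T`. -/
def body (T : Set (List Bool)) : Set (ℕ → Bool) :=
  { x | ∀ n : ℕ, (List.ofFn fun i : Fin n => x i) ∈ T }

/-- `T_t`: the set of nodes of `T` compatible with `t`. -/
def subtreeAt (T : Set (List Bool)) (t : List Bool) : Set (List Bool) :=
  { u ∈ T | u <+: t ∨ t <+: u }

/-- `t ⊕ u` for finite sequences: `(t ⊕ u)(m) = t(m)` for `m < |t|` and
`(t ⊕ u)(m) = u(m)` for `|t| ≤ m < |u|`; if `|u| < |t|` it is `t↾|u|`. -/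
def oplusL (t u : List Bool) : List Bool :=
  t.take u.length ++ u.drop t.length

/-- `t ⊕ x` for `x ∈ 2^ω`: `(t ⊕ x)(m) = t(m)` for `m < |t|`, and `x(m)` otherwise. -/
def oplusF (t : List Bool) (x : ℕ → Bool) : ℕ → Bool :=
  fun m => t.getD m (x m)

namespace Aux

theorem transfer {T : Set (List Bool)} (hT : IsSilver T) :
    ∀ (w s t : List Bool), s ∈ T → t ∈ T → s.length = t.length → s ++ w ∈ T → t ++ w ∈ T := by
  intro w
  induction w with
  | nil => intro s t _ ht _ _; simpa using ht
  | cons i w ih =>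
    intro s t hs ht hlen h
    rw [List.append_cons] at h
    have h1 : s ++ [i] ∈ T := by
      have := hT.1.1 _ h (s.length + 1)
      simpa [List.take_append, List.take_of_length_le] using this
    have h2 : t ++ [i] ∈ T := (hT.2 s hs t ht hlen i).mp h1
    have := ih (s ++ [i]) (t ++ [i]) h1 h2 (by simp [hlen]) h
    rw [List.append_cons]; exact this

theorem exists_long {T : Set (List Bool)} (hT : IsPerfect T) {v : List Bool} (hv : v ∈ T) :
    ∀ m : ℕ, ∃ t ∈ T, v <+: t ∧ m ≤ t.length := by
  intro m
  induction m with
  | zero => exact ⟨v, hv, List.prefix_refl v, Nat.zero_le _⟩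
  | succ m ih =>
    obtain ⟨t, htT, hvt, hmt⟩ := ih
    obtain ⟨s, hts, hsplit⟩ := hT.2.2 t htT
    refine ⟨s ++ [false], hsplit.2.1, hvt.trans (hts.trans ⟨[false], rfl⟩), ?_⟩
    have := hts.length_le
    simp only [List.length_append, List.length_cons, List.length_nil]; omega

theorem exists_len {T : Set (List Bool)} (hT : IsPerfect T) {v : List Bool} (hv : v ∈ T)
    {m : ℕ} (hm : v.length ≤ m) : ∃ t ∈ T, v <+: t ∧ t.length = m := by
  obtain ⟨t, htT, hvt, hmt⟩ := exists_long hT hv m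
  refine ⟨t.take m, hT.1 t htT m, ?_, by simp [hmt]⟩
  exact List.prefix_take_iff.mpr ⟨hvt, hm⟩

end Aux

namespace Aux

variable {T : Set (List Bool)} {n : ℕ} {t₀ : List Bool} {S : Set (List Bool)}

/-- elements of S of length ≤ n are prefixes of t₀ -/
theorem S_short (hSsub : S ⊆ subtreeAt T t₀) (ht₀len : t₀.length = n)
    {u : List Bool} (hu : u ∈ S) (hlen : u.length ≤ n) : u = t₀.take u.length := by
  rcases (hSsub hu).2 with h | h
  · exact List.prefix_iff_eq_take.mp h
  · have h1 := h.length_le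
    have h2 : t₀ = u := h.eq_of_length (by omega)
    rw [← h2, List.take_of_length_le le_rfl]

/-- elements of S of length ≥ n extend t₀ -/
theorem S_long (hSsub : S ⊆ subtreeAt T t₀) (ht₀len : t₀.length = n)
    {u : List Bool} (hu : u ∈ S) (hlen : n ≤ u.length) : t₀ <+: u := by
  rcases (hSsub hu).2 with h | h
  · have h1 := h.length_le
    have h2 : u = t₀ := h.eq_of_length (by omega)
    rw [h2]
  · exact h

/-- S contains all prefixes of t₀ -/
theorem S_t0take (hS : IsSilver S) (hSsub : S ⊆ subtreeAt T t₀) (ht₀len : t₀.length = n) :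
    ∀ k, t₀.take k ∈ S := by
  obtain ⟨u, hu⟩ := hS.1.2.1
  obtain ⟨s, hsS, _, hslen⟩ := exists_long hS.1 hu (n + u.length)
  have hns : n ≤ s.length := by omega
  have hpre : t₀ <+: s := S_long hSsub ht₀len hsS hns
  intro k
  rcases le_or_gt k n with hk | hk
  · have : t₀.take k = s.take k := by
      rw [List.prefix_iff_eq_take.mp hpre, List.take_take, ht₀len]
      congr 1; omega
    rw [this]; exact hS.1.1 s hsS k
  · rw [List.take_of_length_le (by omega)]
    have : t₀ = s.take n := by
      rw [List.prefix_iff_eq_take.mp hpre, ht₀len]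
    rw [this]; exact hS.1.1 s hsS n

theorem t0_mem (hS : IsSilver S) (hSsub : S ⊆ subtreeAt T t₀) (ht₀len : t₀.length = n) :
    t₀ ∈ S := by
  have := S_t0take hS hSsub ht₀len n
  rwa [← ht₀len, List.take_length] at this

end Aux

namespace Aux

theorem mem_U_iff (hT : IsSilver T) (hS : IsSilver S) (hSsub : S ⊆ subtreeAt T t₀)
    (ht₀ : t₀ ∈ T) (ht₀len : t₀.length = n) (v : List Bool) :
    v ∈ (⋃ t ∈ { t ∈ T | t.length = n }, oplusL t '' S) ↔
      (v.length ≤ n ∧ v ∈ T) ∨ (n ≤ v.length ∧ v.take n ∈ T ∧ t₀ ++ v.drop n ∈ S) := by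
  simp only [Set.mem_iUnion, Set.mem_image, Set.mem_setOf_eq, exists_prop]
  constructor
  · rintro ⟨t, ⟨htT, htlen⟩, u, huS, rfl⟩
    rcases le_or_gt u.length n with hu | hu
    · left
      have hud : u.drop t.length = [] := List.drop_eq_nil_of_le (by omega)
      rw [oplusL, hud, List.append_nil]
      refine ⟨?_, hT.1.1 t htT u.length⟩
      rw [List.length_take]; omega
    · right
      have h1 : t.take u.length = t := List.take_of_length_le (by omega)
      obtain ⟨w, hw⟩ := S_long hSsub ht₀len huS (by omega)
      have hdrop : u.drop t.length = w := by rw [← hw, htlen, ← ht₀len, List.drop_left]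
      rw [oplusL, h1, hdrop]
      have hlen : n ≤ (t ++ w).length := by simp; omega
      have htake : (t ++ w).take n = t := by rw [← htlen, List.take_left]
      have hdrop2 : (t ++ w).drop n = w := by rw [← htlen, List.drop_left]
      exact ⟨hlen, by rw [htake]; exact htT, by rw [hdrop2, hw]; exact huS⟩
  · rintro (⟨hlen, hvT⟩ | ⟨hlen, hvtT, hvS⟩)
    · obtain ⟨t, htT, hvt, htlen⟩ := exists_len (m := n) hT.1 hvT hlen
      refine ⟨t, ⟨htT, htlen⟩, t₀.take v.length, S_t0take hS hSsub ht₀len v.length, ?_⟩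
      have hl : (t₀.take v.length).length = v.length := by simp; omega
      rw [oplusL, hl, List.drop_eq_nil_of_le (by simp; omega), List.append_nil]
      exact (List.prefix_iff_eq_take.mp hvt).symm
    · refine ⟨v.take n, ⟨hvtT, by simp; omega⟩, t₀ ++ v.drop n, hvS, ?_⟩
      have h1 : (v.take n).length = n := by simp; omega
      have h2 : (t₀ ++ v.drop n).length = v.length := by simp; omega
      have h3 : (t₀ ++ v.drop n).drop n = v.drop n := by
        rw [← ht₀len, List.drop_left]
      rw [oplusL, h2, h1, h3, List.take_of_length_le (by omega)]
      exact List.take_append_drop ..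
end Aux

namespace Aux

theorem ofFn_take (y : ℕ → Bool) {m k : ℕ} (h : k ≤ m) :
    (List.ofFn fun i : Fin m => y i).take k = List.ofFn fun i : Fin k => y i := by
  apply List.ext_getElem
  · simp; omega
  · intro i h1 h2
    simp [List.getElem_take]

theorem ofFn_drop (y : ℕ → Bool) (m k : ℕ) :
    (List.ofFn fun i : Fin m => y i).drop k = List.ofFn fun i : Fin (m - k) => y (k + i) := by
  apply List.ext_getElem
  · simp
  · intro i h1 h2
    simp [List.getElem_drop]

theorem ofFn_congr' {x y : ℕ → Bool} {m : ℕ} (h : ∀ i < m, x i = y i) :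
    (List.ofFn fun i : Fin m => x i) = List.ofFn fun i : Fin m => y i :=
  congrArg List.ofFn (funext fun i => h i i.2)

theorem ofFn_split (x : ℕ → Bool) {n m : ℕ} (h : n ≤ m) :
    (List.ofFn fun i : Fin m => x i) =
      (List.ofFn fun i : Fin n => x i) ++ List.ofFn fun j : Fin (m - n) => x (n + j) := by
  apply List.ext_getElem
  · simp; omega
  · intro i h1 h2
    rw [List.getElem_append]
    split
    · simp
    · simp only [List.getElem_ofFn, List.length_ofFn]
      congr 1
      simp only [List.length_ofFn] at *
      omega

theorem ofFn_oplusF_short (t : List Bool) (y : ℕ → Bool) {m : ℕ} (hm : m ≤ t.length) :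
    (List.ofFn fun i : Fin m => oplusF t y i) = t.take m := by
  apply List.ext_getElem
  · simp; omega
  · intro i h1 h2
    simp only [List.getElem_ofFn, List.getElem_take, oplusF]
    rw [List.getD_eq_getElem _ _ (by simp at h1 ⊢; omega)]

theorem oplusF_high (t : List Bool) (y : ℕ → Bool) {m : ℕ} (hm : t.length ≤ m) :
    oplusF t y m = y m := List.getD_eq_default t _ hm

theorem ofFn_eq_self (t : List Bool) {m : ℕ} (hm : t.length = m) (y : ℕ → Bool)
    (h : ∀ i (hi : i < t.length), y i = t[i]) :
    (List.ofFn fun i : Fin m => y i) = t := by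
  apply List.ext_getElem
  · simp [hm]
  · intro i h1 h2
    simp only [List.getElem_ofFn]
    exact h i h2

end Aux

namespace Aux

theorem U_silver (hT : IsSilver T) (hS : IsSilver S) (hSsub : S ⊆ subtreeAt T t₀)
    (ht₀ : t₀ ∈ T) (ht₀len : t₀.length = n) :
    IsSilver (⋃ t ∈ { t ∈ T | t.length = n }, oplusL t '' S) := by
  have hmem := mem_U_iff (n := n) hT hS hSsub ht₀ ht₀len
  have ht₀S : t₀ ∈ S := t0_mem hS hSsub ht₀len
  refine ⟨⟨?_, ?_, ?_⟩, ?_⟩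
  -- IsTree
  · intro v hv k
    rw [hmem] at hv ⊢
    rcases hv with ⟨hl, hvT⟩ | ⟨hl, h1, h2⟩
    · exact Or.inl ⟨by rw [List.length_take]; omega, hT.1.1 v hvT k⟩
    · rcases le_or_gt k n with hk | hk
      · left
        refine ⟨by rw [List.length_take]; omega, ?_⟩
        have : v.take k = (v.take n).take k := by
          rw [List.take_take, min_eq_left hk]
        rw [this]; exact hT.1.1 _ h1 k
      · right
        refine ⟨by rw [List.length_take]; omega, ?_, ?_⟩
        · have : (v.take k).take n = v.take n := by
            rw [List.take_take, min_eq_left (le_of_lt hk)]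
          rw [this]; exact h1
        · have : (v.take k).drop n = (v.drop n).take (k - n) := List.drop_take ..
          rw [this]
          have h3 : t₀ ++ (v.drop n).take (k - n) = (t₀ ++ v.drop n).take (t₀.length + (k - n)) :=
            (List.take_length_add_append ..).symm
          rw [h3]
          exact hS.1.1 _ h2 _
  -- Nonempty
  · exact ⟨[], by rw [hmem]; exact Or.inl ⟨by simp, by simpa using hT.1.1 t₀ ht₀ 0⟩⟩
  -- splitting nodes
  · intro v hv
    rw [hmem] at hv
    rcases hv with ⟨hl, hvT⟩ | ⟨hl, h1, h2⟩
    · obtain ⟨t, htT, hvt, htlen⟩ := exists_len (m := n) hT.1 hvT hl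
      obtain ⟨s, hts, hsplit⟩ := hS.1.2.2 t₀ ht₀S
      obtain ⟨w, rfl⟩ := hts
      have htake : ∀ w' : List Bool, (t ++ w').take n = t := by
        intro w'; rw [← htlen, List.take_left]
      have hdrop : ∀ w' : List Bool, (t ++ w').drop n = w' := by
        intro w'; rw [← htlen, List.drop_left]
      refine ⟨t ++ w, hvt.trans ⟨w, rfl⟩, ?_, ?_, ?_⟩
      · rw [hmem]
        exact Or.inr ⟨by simp; omega, by rw [htake]; exact htT,
          by rw [hdrop]; exact hsplit.1⟩
      · rw [List.append_assoc, hmem]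
        refine Or.inr ⟨by simp; omega, by rw [htake]; exact htT, ?_⟩
        rw [hdrop, ← List.append_assoc]
        exact hsplit.2.1
      · rw [List.append_assoc, hmem]
        refine Or.inr ⟨by simp; omega, by rw [htake]; exact htT, ?_⟩
        rw [hdrop, ← List.append_assoc]
        exact hsplit.2.2
    · obtain ⟨s, hus, hsplit⟩ := hS.1.2.2 _ h2
      obtain ⟨w, rfl⟩ := hus
      have htake : ∀ w' : List Bool, (v ++ w').take n = v.take n := by
        intro w'; rw [List.take_append_of_le_length hl]
      have hdrop : ∀ w' : List Bool, t₀ ++ (v ++ w').drop n = (t₀ ++ v.drop n) ++ w' := by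
        intro w'; rw [List.drop_append_of_le_length hl, List.append_assoc]
      refine ⟨v ++ w, ⟨w, rfl⟩, ?_, ?_, ?_⟩
      · rw [hmem]
        exact Or.inr ⟨by simp; omega, by rw [htake]; exact h1,
          by rw [hdrop]; exact hsplit.1⟩
      · rw [List.append_assoc, hmem]
        refine Or.inr ⟨by simp; omega, by rw [htake]; exact h1, ?_⟩
        rw [hdrop, ← List.append_assoc]
        exact hsplit.2.1
      · rw [List.append_assoc, hmem]
        refine Or.inr ⟨by simp; omega, by rw [htake]; exact h1, ?_⟩
        rw [hdrop, ← List.append_assoc]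
        exact hsplit.2.2
  -- uniformity
  · intro s hs t ht hlen i
    rw [hmem] at hs ht
    rw [hmem, hmem]
    rcases le_or_gt (s.length + 1) n with h | h
    · have hsT : s ∈ T := by
        rcases hs with ⟨_, h'⟩ | ⟨h', _, _⟩
        · exact h'
        · omega
      have htT : t ∈ T := by
        rcases ht with ⟨_, h'⟩ | ⟨h', _, _⟩
        · exact h'
        · omega
      have key : ∀ r : List Bool, r.length + 1 ≤ n →
          ((((r ++ [i]).length ≤ n ∧ r ++ [i] ∈ T) ∨
            (n ≤ (r ++ [i]).length ∧ (r ++ [i]).take n ∈ T ∧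
              t₀ ++ (r ++ [i]).drop n ∈ S)) ↔ r ++ [i] ∈ T) := by
        intro r hr
        constructor
        · rintro (⟨_, h'⟩ | ⟨h', h'', _⟩)
          · exact h'
          · have : (r ++ [i]).length = n := by simp at h' ⊢; omega
            rwa [← this, List.take_length] at h''
        · intro h'
          exact Or.inl ⟨by simp; omega, h'⟩
      rw [key s h, key t (by omega), hT.2 s hsT t htT hlen i]
    · have hn : n ≤ s.length := by omega
      have hs2 : t₀ ++ s.drop n ∈ S := by
        rcases hs with ⟨h', hsT⟩ | ⟨_, _, h'⟩
        · have hsn : s.length = n := by omega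
          have : s.drop n = [] := List.drop_eq_nil_of_le (by omega)
          rw [this, List.append_nil]; exact ht₀S
        · exact h'
      have ht2 : t₀ ++ t.drop n ∈ S := by
        rcases ht with ⟨h', htT⟩ | ⟨_, _, h'⟩
        · have : t.drop n = [] := List.drop_eq_nil_of_le (by omega)
          rw [this, List.append_nil]; exact ht₀S
        · exact h'
      have hs1 : s.take n ∈ T := by
        rcases hs with ⟨h', hsT⟩ | ⟨_, h', _⟩
        · rwa [List.take_of_length_le (by omega)]
        · exact h'
      have key : ∀ r : List Bool, n ≤ r.length → r.take n ∈ T →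
          ((((r ++ [i]).length ≤ n ∧ r ++ [i] ∈ T) ∨
            (n ≤ (r ++ [i]).length ∧ (r ++ [i]).take n ∈ T ∧
              t₀ ++ (r ++ [i]).drop n ∈ S)) ↔ (t₀ ++ r.drop n) ++ [i] ∈ S) := by
        intro r hr hrt
        have e1 : (r ++ [i]).take n = r.take n := List.take_append_of_le_length hr
        have e2 : t₀ ++ (r ++ [i]).drop n = (t₀ ++ r.drop n) ++ [i] := by
          rw [List.drop_append_of_le_length hr, List.append_assoc]
        constructor
        · rintro (⟨h', _⟩ | ⟨_, _, h'⟩)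
          · simp at h'; omega
          · rwa [e2] at h'
        · intro h'
          exact Or.inr ⟨by simp; omega, by rwa [e1], by rwa [e2]⟩
      have ht1 : t.take n ∈ T := by
        rcases ht with ⟨h', htT⟩ | ⟨_, h', _⟩
        · rwa [List.take_of_length_le (by omega)]
        · exact h'
      rw [key s hn hs1, key t (by omega) ht1,
        hS.2 _ hs2 _ ht2 (by simp; omega) i]

theorem U_sub (hT : IsSilver T) (hS : IsSilver S) (hSsub : S ⊆ subtreeAt T t₀)
    (ht₀ : t₀ ∈ T) (ht₀len : t₀.length = n) :
    (⋃ t ∈ { t ∈ T | t.length = n }, oplusL t '' S) ⊆ T := by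
  intro v hv
  rw [mem_U_iff (n := n) hT hS hSsub ht₀ ht₀len] at hv
  rcases hv with ⟨_, hvT⟩ | ⟨hl, h1, h2⟩
  · exact hvT
  · have hTm : t₀ ++ v.drop n ∈ T := (hSsub h2).1
    have := transfer hT (v.drop n) t₀ (v.take n) ht₀ h1
      (by rw [List.length_take]; omega) hTm
    rwa [List.take_append_drop] at this

end Aux

namespace Aux

theorem U_body (hT : IsSilver T) (hS : IsSilver S) (hSsub : S ⊆ subtreeAt T t₀)
    (ht₀ : t₀ ∈ T) (ht₀len : t₀.length = n) :
    body (⋃ t ∈ { t ∈ T | t.length = n }, oplusL t '' S) =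
      ⋃ t ∈ { t ∈ T | t.length = n }, oplusF t '' body S := by
  have hmem := mem_U_iff (n := n) hT hS hSsub ht₀ ht₀len
  ext y
  constructor
  · intro hy
    have hy' := fun m : ℕ => (hmem (List.ofFn fun i : Fin m => y i)).mp (hy m)
    simp only [Set.mem_iUnion, Set.mem_image, Set.mem_setOf_eq, exists_prop]
    set t := List.ofFn fun i : Fin n => y i with htdef
    have htlen : t.length = n := by simp [htdef]
    have htU := hy' n
    have htT : t ∈ T := by
      rcases htU with ⟨_, h'⟩ | ⟨_, h', _⟩
      · exact h'
      · rw [List.take_of_length_le (by simp)] at h'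
        exact h'
    refine ⟨t, ⟨htT, htlen⟩, oplusF t₀ y, ?_, ?_⟩
    · simp only [body, Set.mem_setOf_eq]
      intro m
      rcases le_or_gt m n with hm | hm
      · rw [ofFn_oplusF_short t₀ y (by omega)]
        exact S_t0take hS hSsub ht₀len m
      · have hym := hy' m
        rcases hym with ⟨h', _⟩ | ⟨_, _, h2⟩
        · simp at h'; omega
        · have e1 : (List.ofFn fun i : Fin m => oplusF t₀ y i) =
              (List.ofFn fun i : Fin n => oplusF t₀ y i) ++
                List.ofFn fun j : Fin (m - n) => oplusF t₀ y (n + j) :=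
            ofFn_split _ (by omega)
          have e2 : (List.ofFn fun i : Fin n => oplusF t₀ y i) = t₀ := by
            rw [ofFn_oplusF_short t₀ y (by omega), ← ht₀len, List.take_length]
          have e3 : (List.ofFn fun j : Fin (m - n) => oplusF t₀ y (n + j)) =
              List.ofFn fun j : Fin (m - n) => y (n + j) :=
            ofFn_congr' fun j hj => oplusF_high t₀ y (by omega)
          have e4 : (List.ofFn fun i : Fin m => y i).drop n =
              List.ofFn fun j : Fin (m - n) => y (n + j) := ofFn_drop y m n
          rw [e1, e2, e3, ← e4]
          exact h2
    · funext m
      rcases lt_or_ge m n with hm | hm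
      · show t.getD m (oplusF t₀ y m) = y m
        rw [List.getD_eq_getElem _ _ (by omega)]
        simp [htdef]
      · show t.getD m (oplusF t₀ y m) = y m
        rw [List.getD_eq_default _ _ (by omega), oplusF_high t₀ y (by omega)]
  · intro hy
    simp only [Set.mem_iUnion, Set.mem_image, Set.mem_setOf_eq, exists_prop] at hy
    obtain ⟨t, ⟨htT, htlen⟩, x, hx, rfl⟩ := hy
    intro m
    refine (hmem _).mpr ?_
    rcases le_or_gt m n with hm | hm
    · left
      rw [ofFn_oplusF_short t x (by omega)]
      exact ⟨by rw [List.length_take]; omega, hT.1.1 t htT m⟩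
    · right
      have hXn : (List.ofFn fun i : Fin n => x i) = t₀ := by
        have h1 := hx n
        have h2 := S_short hSsub ht₀len h1 (by simp)
        rw [h2]
        simp [← ht₀len]
      refine ⟨by simp; omega, ?_, ?_⟩
      · rw [ofFn_take _ (le_of_lt hm), ofFn_oplusF_short t x (by omega), ← htlen,
          List.take_length]
        exact htT
      · rw [ofFn_drop]
        have e3 : (List.ofFn fun j : Fin (m - n) => oplusF t x (n + j)) =
            List.ofFn fun j : Fin (m - n) => x (n + j) :=
          ofFn_congr' fun j hj => oplusF_high t x (by omega)
        rw [e3, ← hXn, ← ofFn_split x (le_of_lt hm)]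
        exact hx m

end Aux


/-- Let `T` be a Silver tree, `F` the set of nodes of `T` of length `n`, `t₀ ∈ F`,
and `S ⊆ T_{t₀}` a Silver tree. Then `⋃_{t ∈ F} (t ⊕ S)` is a Silver tree contained
in `T`, and its body equals `⋃_{t ∈ F} {t ⊕ x : x ∈ [S]}`. -/
theorem silver_uniform_union (T : Set (List Bool)) (hT : IsSilver T) (n : ℕ)
    (t₀ : List Bool) (ht₀ : t₀ ∈ T) (ht₀len : t₀.length = n)
    (S : Set (List Bool)) (hS : IsSilver S) (hSsub : S ⊆ subtreeAt T t₀) :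
    IsSilver (⋃ t ∈ { t ∈ T | t.length = n }, oplusL t '' S) ∧
    (⋃ t ∈ { t ∈ T | t.length = n }, oplusL t '' S) ⊆ T ∧
    body (⋃ t ∈ { t ∈ T | t.length = n }, oplusL t '' S) =
      ⋃ t ∈ { t ∈ T | t.length = n }, oplusF t '' body S := by
  exact ⟨Aux.U_silver hT hS hSsub ht₀ ht₀len, Aux.U_sub hT hS hSsub ht₀ ht₀len,
    Aux.U_body hT hS hSsub ht₀ ht₀len⟩
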